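/- The magic witness is additive under tensor products: for every n-qubit state ρ, every m-qubit state σ, and every real α > 0 with α ≠ 1, one has A_α(ρ ⊗ σ) = A_α(ρ) · A_α(σ) (where ⊗ is the Kronecker product, yielding an (n+m)-qubit state) and W_α(ρ ⊗ σ) = W_α(ρ) + W_α(σ). -/

import Mathlib

open Matrix Complex BigOperators
open scoped ComplexOrder

noncomputable section

/-- Index type for `n` qubits: functions `Fin n → Fin 2` (cardinality `2^n`). -/
abbrev QIdx (n : ℕ) := Fin n → Fin 2

/-- The four single-qubit Pauli matrices: `σ⁰ = I`, `σ¹ = σˣ`, `σ² = σᶻ`, `σ³ = σʸ`. -/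
def pauliMat : Fin 4 → Matrix (Fin 2) (Fin 2) ℂ
  | 0 => 1
  | 1 => !![0, 1; 1, 0]
  | 2 => !![1, 0; 0, -1]
  | 3 => !![0, -Complex.I; Complex.I, 0]

/-- The Pauli string `σ^{a_1} ⊗ ⋯ ⊗ σ^{a_n}` as a `2^n × 2^n` matrix. -/
def pauliString {n : ℕ} (a : Fin n → Fin 4) : Matrix (QIdx n) (QIdx n) ℂ :=
  fun i j => ∏ k, pauliMat (a k) (i k) (j k)

/-- An `n`-qubit state: positive semidefinite with unit trace. -/
def IsState {n : ℕ} (ρ : Matrix (QIdx n) (QIdx n) ℂ) : Prop :=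
  ρ.PosSemidef ∧ ρ.trace = 1

/-- The `α`-moment of the Pauli spectrum `A_α(ρ) = 2^{-n} ∑_P |tr(ρP)|^{2α}`. -/
def Amom {n : ℕ} (α : ℝ) (ρ : Matrix (QIdx n) (QIdx n) ℂ) : ℝ :=
  ((2:ℝ)^n)⁻¹ * ∑ a : Fin n → Fin 4, (‖(ρ * pauliString a).trace‖) ^ (2 * α)

/-- The 2-Rényi entropy `S₂(ρ) = -ln tr(ρ²)`. -/
def S2 {n : ℕ} (ρ : Matrix (QIdx n) (QIdx n) ℂ) : ℝ :=
  - Real.log ((ρ * ρ).trace.re)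

/-- The magic witness `W_α(ρ) = (1/(1-α)) ln A_α(ρ) - ((1-2α)/(1-α)) S₂(ρ)`. -/
def Wit {n : ℕ} (α : ℝ) (ρ : Matrix (QIdx n) (QIdx n) ℂ) : ℝ :=
  (1 / (1 - α)) * Real.log (Amom α ρ) - ((1 - 2*α)/(1 - α)) * S2 ρ

/-- The stabilizer norm `D(ρ) = A_{1/2}(ρ) = 2^{-n} ∑_P |tr(ρP)|`. -/
def Dnorm {n : ℕ} (ρ : Matrix (QIdx n) (QIdx n) ℂ) : ℝ :=
  Amom (1/2) ρ

/-- A Clifford unitary: unitary mapping every Pauli string to `±` a Pauli string. -/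
def IsCliffordUnitary {n : ℕ} (U : Matrix (QIdx n) (QIdx n) ℂ) : Prop :=
  U ∈ Matrix.unitaryGroup (QIdx n) ℂ ∧
    ∀ a : Fin n → Fin 4, ∃ (b : Fin n → Fin 4) (ε : ℝ),
      (ε = 1 ∨ ε = -1) ∧ U * pauliString a * Uᴴ = (ε : ℂ) • pauliString b

/-- The computational all-zeros basis vector `|0⟩^{⊗n}`. -/
def zeroVec (n : ℕ) : QIdx n → ℂ :=
  fun i => if (∀ k, i k = 0) then 1 else 0

/-- A pure stabilizer state vector: `U|0⟩^{⊗n}` for a Clifford unitary `U`. -/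
def IsPureStab {n : ℕ} (ψ : QIdx n → ℂ) : Prop :=
  ∃ U, IsCliffordUnitary U ∧ ψ = U.mulVec (zeroVec n)

/-- The rank-one projector `|ψ⟩⟨ψ|`. -/
def proj {n : ℕ} (ψ : QIdx n → ℂ) : Matrix (QIdx n) (QIdx n) ℂ :=
  Matrix.vecMulVec ψ (star ψ)

/-- A mixed stabilizer state: a finite convex combination of pure stabilizer projectors. -/
def IsMixedStab {n : ℕ} (ρ : Matrix (QIdx n) (QIdx n) ℂ) : Prop :=
  ∃ (k : ℕ) (p : Fin k → ℝ) (ψ : Fin k → QIdx n → ℂ),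
    (∀ i, 0 ≤ p i) ∧ (∑ i, p i = 1) ∧ (∀ i, IsPureStab (ψ i)) ∧
    ρ = ∑ i, (p i : ℂ) • proj (ψ i)

/-- The set of values `ln ∑ᵢ |xᵢ|` over finite real stabilizer decompositions of `ρ`. -/
def StabDecomps {n : ℕ} (ρ : Matrix (QIdx n) (QIdx n) ℂ) : Set ℝ :=
  { r | ∃ (k : ℕ) (x : Fin k → ℝ) (ψ : Fin k → QIdx n → ℂ),
      (∀ i, IsPureStab (ψ i)) ∧ ρ = ∑ i, (x i : ℂ) • proj (ψ i) ∧
      r = Real.log (∑ i, |x i|) }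

/-- The log-free robustness of magic. -/
def LR {n : ℕ} (ρ : Matrix (QIdx n) (QIdx n) ℂ) : ℝ := sInf (StabDecomps ρ)

open Classical in
/-- Positive-semidefinite square root (junk value `0` off the PSD cone). -/
def psdSqrt {n : ℕ} (A : Matrix (QIdx n) (QIdx n) ℂ) : Matrix (QIdx n) (QIdx n) ℂ :=
  if h : A.PosSemidef then
    h.1.eigenvectorUnitary.1 * diagonal ((fun x => ((Real.sqrt x : ℝ) : ℂ)) ∘ h.1.eigenvalues) *
      (star h.1.eigenvectorUnitary : Matrix (QIdx n) (QIdx n) ℂ)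
  else 0

/-- The Uhlmann fidelity `F(ρ,σ) = (tr √(√ρ σ √ρ))²`. -/
def fidelity {n : ℕ} (ρ σ : Matrix (QIdx n) (QIdx n) ℂ) : ℝ :=
  ((psdSqrt (psdSqrt ρ * σ * psdSqrt ρ)).trace.re) ^ 2

/-- The stabilizer fidelity `D_F(ρ) = inf { -ln F(ρ,σ) : σ a mixed stabilizer state }`. -/
def DF {n : ℕ} (ρ : Matrix (QIdx n) (QIdx n) ℂ) : ℝ :=
  sInf { r | ∃ σ, IsMixedStab σ ∧ r = - Real.log (fidelity ρ σ) }

/-- Filtered Pauli moment `Ã_α(ρ) = (2^n A_α(ρ) - 1)/(2^n - 1)`. -/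
def Atil {n : ℕ} (α : ℝ) (ρ : Matrix (QIdx n) (QIdx n) ℂ) : ℝ :=
  ((2:ℝ)^n * Amom α ρ - 1) / ((2:ℝ)^n - 1)

/-- Filtered stabilizer norm `D̃(ρ) = (2^n D(ρ) - 1)/(2^n - 1)`. -/
def Dtil {n : ℕ} (ρ : Matrix (QIdx n) (QIdx n) ℂ) : ℝ :=
  ((2:ℝ)^n * Dnorm ρ - 1) / ((2:ℝ)^n - 1)

/-- Filtered magic witness `W̃_α(ρ) = (1/(1-α)) ln Ã_α(ρ) + ((1-2α)/(1-α)) ln Ã₁(ρ)`. -/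
def Wtil {n : ℕ} (α : ℝ) (ρ : Matrix (QIdx n) (QIdx n) ℂ) : ℝ :=
  (1/(1-α)) * Real.log (Atil α ρ) + ((1 - 2*α)/(1-α)) * Real.log (Atil 1 ρ)

/-- The maximally mixed state `I/2^n`. -/
def maxMixed (n : ℕ) : Matrix (QIdx n) (QIdx n) ℂ := ((2:ℂ)^n)⁻¹ • 1

/-- The single-qubit T-state vector `|T⟩ = (|0⟩ + e^{-iπ/4}|1⟩)/√2`. -/
def Tket : QIdx 1 → ℂ :=
  fun i => if i 0 = 0 then (Real.sqrt 2 : ℂ)⁻¹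
           else Complex.exp (-(Real.pi/4 : ℂ) * Complex.I) * (Real.sqrt 2 : ℂ)⁻¹

/-- The depolarized T-state `ρ_p = (1-p)|T⟩⟨T| + p·I₂/2`. -/
def rhoDep (p : ℝ) : Matrix (QIdx 1) (QIdx 1) ℂ :=
  ((1 - p : ℝ) : ℂ) • proj Tket + ((p : ℝ) : ℂ) • (((2:ℂ))⁻¹ • 1)


/-- Tensor (Kronecker) product of an `n`-qubit matrix and an `m`-qubit matrix,
realized on the `(n+m)`-qubit index set by splitting an index of `Fin (n+m) → Fin 2`
into its first `n` and last `m` components. -/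
def qTensor {n m : ℕ} (ρ : Matrix (QIdx n) (QIdx n) ℂ)
    (σ : Matrix (QIdx m) (QIdx m) ℂ) : Matrix (QIdx (n+m)) (QIdx (n+m)) ℂ :=
  fun i j => ρ (fun k => i (Fin.castAdd m k)) (fun k => j (Fin.castAdd m k)) *
             σ (fun k => i (Fin.natAdd n k)) (fun k => j (Fin.natAdd n k))


def splitE (n m : ℕ) (β : Type*) : (Fin (n+m) → β) ≃ (Fin n → β) × (Fin m → β) :=
  (Equiv.arrowCongr finSumFinEquiv.symm (Equiv.refl β)).trans
    (Equiv.sumArrowEquivProdArrow _ _ _)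

lemma sum_split {n m : ℕ} {β M : Type*} [Fintype β] [AddCommMonoid M]
    (g : (Fin n → β) → (Fin m → β) → M) :
    ∑ k : Fin (n+m) → β, g (fun l => k (Fin.castAdd m l)) (fun l => k (Fin.natAdd n l))
      = ∑ p : Fin n → β, ∑ q : Fin m → β, g p q :=
  (Fintype.sum_equiv (splitE n m β) _ (fun pq => g pq.1 pq.2) (fun _ => rfl)).trans
    (Fintype.sum_prod_type _)

lemma qTensor_mul {n m : ℕ} (A C : Matrix (QIdx n) (QIdx n) ℂ)
    (B D : Matrix (QIdx m) (QIdx m) ℂ) :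
    qTensor A B * qTensor C D = qTensor (A * C) (B * D) := by
  ext i j
  show ∑ k, qTensor A B i k * qTensor C D k j = _
  simp only [qTensor, Matrix.mul_apply]
  rw [sum_split (g := fun p q =>
    (A (fun l => i (Fin.castAdd m l)) p * B (fun l => i (Fin.natAdd n l)) q) *
    (C p (fun l => j (Fin.castAdd m l)) * D q (fun l => j (Fin.natAdd n l))))]
  rw [Finset.sum_mul_sum]
  exact Finset.sum_congr rfl fun p _ => Finset.sum_congr rfl fun q _ => by ring

lemma trace_qTensor {n m : ℕ} (A : Matrix (QIdx n) (QIdx n) ℂ)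
    (B : Matrix (QIdx m) (QIdx m) ℂ) :
    (qTensor A B).trace = A.trace * B.trace := by
  simp only [Matrix.trace, Matrix.diag, qTensor]
  rw [sum_split (g := fun p q => A p p * B q q), ← Finset.sum_mul_sum]

lemma pauliString_split {n m : ℕ} (a : Fin (n+m) → Fin 4) :
    pauliString a = qTensor (pauliString (fun k => a (Fin.castAdd m k)))
      (pauliString (fun k => a (Fin.natAdd n k))) := by
  ext i j
  simp only [pauliString, qTensor]
  exact Fin.prod_univ_add (f := fun k => pauliMat (a k) (i k) (j k))

lemma pauliString_zero {n : ℕ} : pauliString (fun _ : Fin n => (0 : Fin 4)) = 1 := by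
  ext i j
  simp only [pauliString, pauliMat, Matrix.one_apply]
  rw [Finset.prod_boole]
  simp [funext_iff]

lemma Amom_pos {n : ℕ} {ρ : Matrix (QIdx n) (QIdx n) ℂ} (h : IsState ρ) (α : ℝ) :
    0 < Amom α ρ := by
  unfold Amom
  apply mul_pos (by positivity)
  have h1 : (‖(ρ * pauliString (fun _ : Fin n => (0:Fin 4))).trace‖) ^ (2*α)
      = 1 := by
    rw [pauliString_zero, mul_one, h.2, norm_one, Real.one_rpow]
  have hle : (‖(ρ * pauliString (fun _ : Fin n => (0:Fin 4))).trace‖) ^ (2*α)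
      ≤ ∑ a : Fin n → Fin 4, (‖(ρ * pauliString a).trace‖) ^ (2*α) := by
    apply Finset.single_le_sum (f := fun a : Fin n → Fin 4 =>
        (‖(ρ * pauliString a).trace‖) ^ (2*α))
      (fun a _ => Real.rpow_nonneg (norm_nonneg _) _)
      (Finset.mem_univ _)
  rw [h1] at hle
  linarith

lemma trace_sq {n : ℕ} {ρ : Matrix (QIdx n) (QIdx n) ℂ} (h : IsState ρ) :
    ∃ t : ℝ, 0 < t ∧ (ρ * ρ).trace = (t : ℂ) := by
  have herm := h.1.1
  have key : (ρ * ρ).trace = ((∑ i, ∑ j, Complex.normSq (ρ i j) : ℝ) : ℂ) := by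
    simp only [Matrix.trace, Matrix.diag, Matrix.mul_apply]
    push_cast
    refine Finset.sum_congr rfl fun i _ => Finset.sum_congr rfl fun j _ => ?_
    have hji : ρ j i = star (ρ i j) := by
      conv_lhs => rw [← herm]
      rfl
    rw [hji, RCLike.star_def, Complex.mul_conj]
  have hnn : (0:ℝ) ≤ ∑ i, ∑ j, Complex.normSq (ρ i j) :=
    Finset.sum_nonneg fun i _ => Finset.sum_nonneg fun j _ => Complex.normSq_nonneg _
  refine ⟨_, lt_of_le_of_ne hnn fun h0 => ?_, key⟩
  have ht0 : ∑ i, ∑ j, Complex.normSq (ρ i j) = 0 := h0.symm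
  have hρ0 : ρ = 0 := by
    ext i j
    have hi := (Finset.sum_eq_zero_iff_of_nonneg (fun i _ =>
      Finset.sum_nonneg fun j _ => Complex.normSq_nonneg _)).mp ht0 i (Finset.mem_univ i)
    have hij := (Finset.sum_eq_zero_iff_of_nonneg
      (fun j _ => Complex.normSq_nonneg _)).mp hi j (Finset.mem_univ j)
    exact Complex.normSq_eq_zero.mp hij
  have : ρ.trace = 0 := by rw [hρ0]; simp
  rw [h.2] at this
  exact one_ne_zero this

/-- the Pauli moments are multiplicative and the magic witness is
additive under tensor products. -/
theorem witness_additive {n m : ℕ} (ρ : Matrix (QIdx n) (QIdx n) ℂ)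
    (σ : Matrix (QIdx m) (QIdx m) ℂ) (hρ : IsState ρ) (hσ : IsState σ)
    (α : ℝ) (hα : 0 < α) (hα1 : α ≠ 1) :
    Amom α (qTensor ρ σ) = Amom α ρ * Amom α σ ∧
    Wit α (qTensor ρ σ) = Wit α ρ + Wit α σ := by
  have hA : Amom α (qTensor ρ σ) = Amom α ρ * Amom α σ := by
    unfold Amom
    have key : ∀ a : Fin (n+m) → Fin 4,
        (‖(qTensor ρ σ * pauliString a).trace‖) ^ (2*α)
        = (‖(ρ * pauliString (fun k => a (Fin.castAdd m k))).trace‖) ^ (2*α) *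
          (‖(σ * pauliString (fun k => a (Fin.natAdd n k))).trace‖) ^ (2*α) := by
      intro a
      rw [pauliString_split a, qTensor_mul, trace_qTensor, norm_mul,
        Real.mul_rpow (norm_nonneg _) (norm_nonneg _)]
    have hsum : (∑ a : Fin (n+m) → Fin 4,
          ‖(ρ * pauliString (fun k => a (Fin.castAdd m k))).trace‖ ^ (2*α) *
          ‖(σ * pauliString (fun k => a (Fin.natAdd n k))).trace‖ ^ (2*α))
        = (∑ b : Fin n → Fin 4, ‖(ρ * pauliString b).trace‖ ^ (2*α)) *
          (∑ c : Fin m → Fin 4, ‖(σ * pauliString c).trace‖ ^ (2*α)) := by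
      have hs := sum_split (n := n) (m := m) (β := Fin 4) (M := ℝ)
        (fun b c => ‖(ρ * pauliString b).trace‖ ^ (2*α) *
          ‖(σ * pauliString c).trace‖ ^ (2*α))
      rw [hs, ← Finset.sum_mul_sum]
    rw [Finset.sum_congr rfl fun a _ => key a, hsum, pow_add, mul_inv]
    ring
  refine ⟨hA, ?_⟩
  have hAρ := Amom_pos hρ α
  have hAσ := Amom_pos hσ α
  obtain ⟨tρ, htρ, hρ2⟩ := trace_sq hρ
  obtain ⟨tσ, htσ, hσ2⟩ := trace_sq hσ
  have hS : S2 (qTensor ρ σ) = S2 ρ + S2 σ := by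
    unfold S2
    rw [qTensor_mul, trace_qTensor, hρ2, hσ2, ← Complex.ofReal_mul]
    simp only [Complex.ofReal_re]
    rw [Real.log_mul (ne_of_gt htρ) (ne_of_gt htσ)]
    ring
  unfold Wit
  rw [hA, hS, Real.log_mul (ne_of_gt hAρ) (ne_of_gt hAσ)]
  ring


end
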